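/- For every permutation p of length n ≥ 1, applying the stack sorting map n−1 times yields the identity: s^{n−1}(p) = identity. In particular every permutation of length n is (n−1)-stack sortable. -/

import Mathlib

def push (x : ℕ) : List ℕ → List ℕ → List ℕ × List ℕ
  | [], out => ([x], out)
  | t :: s, out => if t < x then push x s (out ++ [t]) else (x :: t :: s, out)

def sortAux : List ℕ → List ℕ → List ℕ → List ℕ
  | [], stack, out => out ++ stack
  | x :: xs, stack, out =>
      let r := push x stack out
      sortAux xs r.1 r.2

/-- The stack sorting map `s`: `s(∅) = ∅` and `s(L n R) = s(L) s(R) n` with `n` maximal. -/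
def stackSort (p : List ℕ) : List ℕ := sortAux p [] []

lemma push_perm (x : ℕ) : ∀ st out,
    ((push x st out).2 ++ (push x st out).1).Perm (out ++ st ++ [x]) := by
  intro st
  induction st with
  | nil => intro out; simp [push]
  | cons t s ih =>
    intro out
    by_cases h : t < x
    · simp only [push, if_pos h]
      refine (ih (out ++ [t])).trans ?_
      simp
    · simp only [push, if_neg h]
      refine ((List.perm_append_singleton x (t :: s)).symm.append_left out).trans ?_
      simp

lemma push_stack_mem {x : ℕ} : ∀ st out t, t ∈ (push x st out).1 → t = x ∨ t ∈ st := by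
  intro st
  induction st with
  | nil => intro out t ht; simp [push] at ht; exact Or.inl ht
  | cons a s ih =>
    intro out t ht
    by_cases h : a < x
    · simp only [push, if_pos h] at ht
      rcases ih (out ++ [a]) t ht with h1 | h1
      · exact Or.inl h1
      · exact Or.inr (List.mem_cons_of_mem a h1)
    · simp only [push, if_neg h, List.mem_cons] at ht
      rcases ht with h1 | h1 | h1
      · exact Or.inl h1
      · exact Or.inr (by simp [h1])
      · exact Or.inr (by simp [h1])

lemma push_max {x : ℕ} : ∀ st out, (∀ t ∈ st, t < x) → push x st out = ([x], out ++ st) := by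
  intro st
  induction st with
  | nil => intro out _; simp [push]
  | cons a s ih =>
    intro out h
    have ha : a < x := h a (by simp)
    simp only [push, if_pos ha]
    rw [ih (out ++ [a]) (fun t ht => h t (by simp [ht]))]
    simp

lemma push_lt {x nn : ℕ} (hx : x < nn) : ∀ st out, (∀ t ∈ st, t < nn) →
    push x (st ++ [nn]) out = ((push x st out).1 ++ [nn], (push x st out).2) := by
  intro st
  induction st with
  | nil =>
    intro out _
    simp [push, Nat.not_lt.mpr (Nat.le_of_lt hx), Nat.lt_asymm hx]
  | cons a s ih =>
    intro out h
    by_cases ha : a < x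
    · simp only [List.cons_append, push, if_pos ha]
      exact ih (out ++ [a]) (fun t ht => h t (by simp [ht]))
    · simp [push, if_neg ha]

lemma sortAux_perm : ∀ xs st out, (sortAux xs st out).Perm (out ++ st ++ xs) := by
  intro xs
  induction xs with
  | nil => intro st out; simp [sortAux]
  | cons x xs ih =>
    intro st out
    simp only [sortAux]
    refine (ih _ _).trans ?_
    have h1 := push_perm x st out
    refine (h1.append_right xs).trans ?_
    simp

lemma sortAux_append_max {nn : ℕ} : ∀ xs st out, (∀ y ∈ xs, y < nn) → (∀ t ∈ st, t < nn) →
    sortAux (xs ++ [nn]) st out = sortAux xs st out ++ [nn] := by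
  intro xs
  induction xs with
  | nil =>
    intro st out _ hst
    simp [sortAux, push_max st out hst]
  | cons x xs ih =>
    intro st out hxs hst
    have hx : x < nn := hxs x (by simp)
    simp only [List.cons_append, sortAux]
    refine ih _ _ (fun y hy => hxs y (by simp [hy])) ?_
    intro t ht
    rcases push_stack_mem st out t ht with h | h
    · simpa [h] using hx
    · exact hst t h

lemma sortAux_stack_max {nn : ℕ} : ∀ xs st out, (∀ y ∈ xs, y < nn) → (∀ t ∈ st, t < nn) →
    sortAux xs (st ++ [nn]) out = sortAux xs st out ++ [nn] := by
  intro xs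
  induction xs with
  | nil => intro st out _ _; simp [sortAux]
  | cons x xs ih =>
    intro st out hxs hst
    have hx : x < nn := hxs x (by simp)
    simp only [sortAux, push_lt hx st out hst]
    refine ih _ _ (fun y hy => hxs y (by simp [hy])) ?_
    intro t ht
    rcases push_stack_mem st out t ht with h | h
    · simpa [h] using hx
    · exact hst t h

lemma sortAux_split {nn : ℕ} (R : List ℕ) (hR : ∀ y ∈ R, y < nn) :
    ∀ L st out, (∀ y ∈ L, y < nn) → (∀ t ∈ st, t < nn) →
    ∃ o, sortAux (L ++ nn :: R) st out = sortAux R [] o ++ [nn] ∧ o.Perm (out ++ st ++ L) := by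
  intro L
  induction L with
  | nil =>
    intro st out _ hst
    refine ⟨out ++ st, ?_, by simp⟩
    simp only [List.nil_append, sortAux, push_max st out hst]
    have := sortAux_stack_max R [] (out ++ st) hR (by simp)
    simpa using this
  | cons x L ih =>
    intro st out hL hst
    have hx : x < nn := hL x (by simp)
    simp only [List.cons_append, sortAux]
    obtain ⟨o, ho, hperm⟩ := ih (push x st out).1 (push x st out).2
      (fun y hy => hL y (by simp [hy]))
      (fun t ht => by
        rcases push_stack_mem st out t ht with h | h
        · simpa [h] using hx
        · exact hst t h)
    refine ⟨o, ho, hperm.trans ?_⟩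
    refine ((push_perm x st out).append_right L).trans ?_
    simp

lemma stackSort_perm (p : List ℕ) : (stackSort p).Perm p := by
  simpa [stackSort] using sortAux_perm p [] []

lemma iterate_append_max {nn : ℕ} : ∀ k q, (∀ y ∈ q, y < nn) →
    stackSort^[k] (q ++ [nn]) = stackSort^[k] q ++ [nn] := by
  intro k
  induction k with
  | zero => intro q _; simp
  | succ k ih =>
    intro q hq
    rw [Function.iterate_succ_apply, Function.iterate_succ_apply]
    have h1 : stackSort (q ++ [nn]) = stackSort q ++ [nn] := by
      simpa [stackSort] using sortAux_append_max q [] [] hq (by simp)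
    rw [h1]
    exact ih _ fun y hy => hq y ((stackSort_perm q).mem_iff.mp hy)

lemma aux_main : ∀ n : ℕ, ∀ p : List ℕ, p.Perm (List.range' 1 (n + 1)) →
    stackSort^[n] p = List.range' 1 (n + 1) := by
  intro n
  induction n with
  | zero =>
    intro p hp
    simpa using List.perm_singleton.mp (by simpa using hp)
  | succ n ih =>
    intro p hp
    have hmem : n + 2 ∈ p := hp.mem_iff.mpr (by
      simp only [List.mem_range']
      exact ⟨n + 1, by omega, by omega⟩)
    obtain ⟨L, R, rfl⟩ := List.append_of_mem hmem
    have hnodup : (L ++ (n + 2) :: R).Nodup := hp.nodup_iff.mpr (by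
      apply List.nodup_range'
      exact Nat.one_pos)
    have hnnL : (n + 2) ∉ L := by
      intro h
      exact (List.disjoint_of_nodup_append hnodup) h (by simp)
    have hnnR : (n + 2) ∉ R := by
      have := (List.nodup_append.mp hnodup).2.1
      simp at this
      exact this.1
    have hub : ∀ y ∈ L ++ (n + 2) :: R, y < n + 3 := by
      intro y hy
      have := hp.mem_iff.mp hy
      simp [List.mem_range'] at this
      omega
    have hL : ∀ y ∈ L, y < n + 2 := by
      intro y hy
      have h1 := hub y (by simp [hy])
      have : y ≠ n + 2 := fun h => hnnL (h ▸ hy)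
      omega
    have hR : ∀ y ∈ R, y < n + 2 := by
      intro y hy
      have h1 := hub y (by simp [hy])
      have : y ≠ n + 2 := fun h => hnnR (h ▸ hy)
      omega
    obtain ⟨o, ho, hoperm⟩ := sortAux_split R hR L [] [] hL (by simp)
    have hstep : stackSort (L ++ (n + 2) :: R) = sortAux R [] o ++ [n + 2] := ho
    set q := sortAux R [] o with hq
    have hqperm : q.Perm (L ++ R) := by
      refine (sortAux_perm R [] o).trans ?_
      simp only [List.append_nil]
      exact ((by simpa using hoperm : o.Perm L).append_right R)
    have hrange : (List.range' 1 (n + 2)) = List.range' 1 (n + 1) ++ [n + 2] := by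
      rw [List.range'_concat]
      norm_num
      omega
    have hqrange : q.Perm (List.range' 1 (n + 1)) := by
      have h1 : (L ++ (n + 2) :: R).Perm ((L ++ R) ++ [n + 2]) := by
        rw [List.append_assoc]
        exact ((List.perm_append_singleton (n + 2) R).symm.append_left L)
      have h2 : ((L ++ R) ++ [n + 2]).Perm (List.range' 1 (n + 1) ++ [n + 2]) :=
        h1.symm.trans (hp.trans (by rw [hrange]))
      exact hqperm.trans ((List.perm_append_right_iff [n + 2]).mp h2)
    rw [Function.iterate_succ_apply, hstep, iterate_append_max n q
      (fun y hy => by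
        have := hqrange.mem_iff.mp hy
        simp [List.mem_range'] at this
        omega), ih q hqrange, ← hrange]

/-- For every permutation `p` of length `n ≥ 1`, applying the stack sorting map
`n - 1` times yields the identity: every permutation of length `n` is
`(n-1)`-stack sortable. -/
theorem stmt_7 (n : ℕ) (hn : 1 ≤ n) (p : List ℕ) (hp : p.Perm (List.range' 1 n)) :
    stackSort^[n - 1] p = List.range' 1 n := by
  obtain ⟨m, rfl⟩ := Nat.exists_eq_add_of_le hn
  rw [Nat.add_comm 1 m] at hp ⊢
  simpa using aux_main m p hp
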